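/- For ε ∈ [−1/12, 1/12] consider the 2×2 matrix game M^ε with payoff matrix [[2/3 − ε, 1/3 + ε],[1/3, 2/3]]. Let μ ∈ Δ₂ be a min-player strategy with μ(1) ≤ 1/2. Then the exploitability gap of (μ, ν) in the game M^ε satisfies EG(μ,ν) ≥ ε/2 for any ν ∈ Δ₂, provided ε ≥ 0. -/

import Mathlib

theorem stdSimplex_mk_apply' (f : Fin 2 → ℝ) (h : f ∈ stdSimplex ℝ (Fin 2)) (i : Fin 2) :
    (⟨f, h⟩ : stdSimplex ℝ (Fin 2)) i = f i := rfl

theorem stmt11 (ε : ℝ) (hε : ε ∈ Set.Icc (-(1/12) : ℝ) (1/12)) (hε0 : 0 ≤ ε)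
    (μ : Fin 2 → ℝ) (hμ : μ ∈ stdSimplex ℝ (Fin 2)) (hμ1 : μ 0 ≤ 1/2)
    (ν : Fin 2 → ℝ) (hν : ν ∈ stdSimplex ℝ (Fin 2)) :
    ε / 2 ≤
      (⨆ ν' : stdSimplex ℝ (Fin 2), ∑ a, ∑ b,
        μ a * (ν' : Fin 2 → ℝ) b *
          (![![2/3 - ε, 1/3 + ε], ![1/3, 2/3]] : Fin 2 → Fin 2 → ℝ) a b) -
      (⨅ μ' : stdSimplex ℝ (Fin 2), ∑ a, ∑ b,
        (μ' : Fin 2 → ℝ) a * ν b *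
          (![![2/3 - ε, 1/3 + ε], ![1/3, 2/3]] : Fin 2 → Fin 2 → ℝ) a b) := by
  obtain ⟨hε1, hε2⟩ := hε
  obtain ⟨hμ0, hμs⟩ := hμ
  obtain ⟨hν0, hνs⟩ := hν
  simp only [Fin.sum_univ_two] at hμs hνs
  have hμ00 := hμ0 0; have hμ01 := hμ0 1
  have hν00 := hν0 0; have hν01 := hν0 1
  have hden : (0:ℝ) < 2 - 6 * ε := by linarith
  set p : ℝ := 1 / (2 - 6 * ε) with hp
  have hp0 : 0 ≤ p := by positivity
  have hp1 : p ≤ 1 := by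
    rw [hp, div_le_one hden]; linarith
  -- the two witness strategies
  have he1 : (![0, 1] : Fin 2 → ℝ) ∈ stdSimplex ℝ (Fin 2) := by
    constructor
    · intro i; fin_cases i <;> norm_num
    · simp [Fin.sum_univ_two]
  have hms : (![p, 1 - p] : Fin 2 → ℝ) ∈ stdSimplex ℝ (Fin 2) := by
    constructor
    · intro i; fin_cases i <;> simp <;> linarith
    · simp [Fin.sum_univ_two]
  -- bounded above
  have hbddA : BddAbove (Set.range fun ν' : stdSimplex ℝ (Fin 2) => ∑ a, ∑ b,
      μ a * (ν' : Fin 2 → ℝ) b *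
        (![![2/3 - ε, 1/3 + ε], ![1/3, 2/3]] : Fin 2 → Fin 2 → ℝ) a b) := by
    refine ⟨1, ?_⟩
    rintro x ⟨⟨ν', hν'⟩, rfl⟩
    simp only [stdSimplex_mk_apply']
    obtain ⟨h0, hs⟩ := hν'
    have h00 := h0 0; have h01 := h0 1
    simp only [Fin.sum_univ_two] at hs ⊢
    simp only [stdSimplex_mk_apply', Matrix.cons_val_zero, Matrix.cons_val_one, Matrix.head_cons] at *
    nlinarith [mul_nonneg hμ00 h00, mul_nonneg hμ00 h01, mul_nonneg hμ01 h00,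
      mul_nonneg hμ01 h01]
  -- bounded below
  have hbddB : BddBelow (Set.range fun μ' : stdSimplex ℝ (Fin 2) => ∑ a, ∑ b,
      (μ' : Fin 2 → ℝ) a * ν b *
        (![![2/3 - ε, 1/3 + ε], ![1/3, 2/3]] : Fin 2 → Fin 2 → ℝ) a b) := by
    refine ⟨0, ?_⟩
    rintro x ⟨⟨μ', hμ'⟩, rfl⟩
    simp only [stdSimplex_mk_apply']
    obtain ⟨h0, hs⟩ := hμ'
    have h00 := h0 0; have h01 := h0 1
    simp only [Fin.sum_univ_two] at hs ⊢
    simp only [stdSimplex_mk_apply', Matrix.cons_val_zero, Matrix.cons_val_one, Matrix.head_cons] at *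
    nlinarith [mul_nonneg h00 hν00, mul_nonneg h00 hν01, mul_nonneg h01 hν00,
      mul_nonneg h01 hν01]
  have hsup : (1/2 : ℝ) + ε / 2 ≤ ⨆ ν' : stdSimplex ℝ (Fin 2), ∑ a, ∑ b,
      μ a * (ν' : Fin 2 → ℝ) b *
        (![![2/3 - ε, 1/3 + ε], ![1/3, 2/3]] : Fin 2 → Fin 2 → ℝ) a b := by
    refine le_trans ?_ (le_ciSup hbddA ⟨![0,1], he1⟩)
    simp only [Fin.sum_univ_two]
    simp only [stdSimplex_mk_apply', Matrix.cons_val_zero, Matrix.cons_val_one, Matrix.head_cons]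
    nlinarith [mul_nonneg hμ00 hε0]
  have hinf : (⨅ μ' : stdSimplex ℝ (Fin 2), ∑ a, ∑ b,
      (μ' : Fin 2 → ℝ) a * ν b *
        (![![2/3 - ε, 1/3 + ε], ![1/3, 2/3]] : Fin 2 → Fin 2 → ℝ) a b) ≤ 1/2 := by
    refine le_trans (ciInf_le hbddB ⟨![p, 1-p], hms⟩) ?_
    simp only [Fin.sum_univ_two]
    simp only [stdSimplex_mk_apply', Matrix.cons_val_zero, Matrix.cons_val_one, Matrix.head_cons]
    have : p * (2 - 6 * ε) = 1 := by
      rw [hp]; field_simp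
    nlinarith [this]
  linarith
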